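/- Let (X,d) be a metric space and μ a Borel measure on X, finite and positive on balls; write V(x,r)=μ(B(x,r)). Fix m≥2, D≥1 and κ∈[0,m/(m−1)), and assume condition (II.2): V(x,τr) ≤ D τ^D V(x,r) exp(τ^κ + r^κ) for all x∈X, τ≥1, r>0. Then for every ε>0 there exists a constant C_ε>0 such that for all t∈(0,1], all s>0, and all x,y∈X with d(x,y) ≤ 2 t^{1/m}, V(x,(2s)^{1/m}) ≤ C_ε · V(y, s^{1/m}) · exp( ε (t/s)^{1/(m−1)} + s^{κ/m} ). -/

import Mathlib

open MeasureTheory Metric Real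

lemma aux_poly (p q A δ : ℝ) (hq : 0 ≤ q) (hpq : q < p) (hA : 0 < A) (hδ : 0 < δ) :
    ∃ C : ℝ, 0 < C ∧ ∀ w : ℝ, 0 ≤ w → A * w ^ q ≤ δ * w ^ p + C := by
  set R := max 1 ((A / δ) ^ (1 / (p - q))) with hRdef
  have hR1 : (1 : ℝ) ≤ R := le_max_left _ _
  have hR0 : 0 < R := lt_of_lt_of_le one_pos hR1
  refine ⟨A * R ^ q, by positivity, fun w hw => ?_⟩
  rcases le_total w R with h | h
  · have h1 : w ^ q ≤ R ^ q := Real.rpow_le_rpow hw h hq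
    have h2 : 0 ≤ δ * w ^ p := by positivity
    nlinarith
  · have hw1 : (1 : ℝ) ≤ w := hR1.trans h
    have hw0 : 0 < w := lt_of_lt_of_le one_pos hw1
    have hpq' : 0 < p - q := sub_pos.mpr hpq
    have key : A / δ ≤ w ^ (p - q) := by
      have h2 : (A / δ) ^ (1 / (p - q)) ≤ w := le_trans (le_max_right _ _) h
      calc A / δ = ((A / δ) ^ (1 / (p - q))) ^ (p - q) := by
            rw [← Real.rpow_mul (by positivity), one_div, inv_mul_cancel₀ hpq'.ne',
              Real.rpow_one]
        _ ≤ w ^ (p - q) := Real.rpow_le_rpow (Real.rpow_nonneg (by positivity) _) h2 hpq'.le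
    have hAδ : A ≤ δ * w ^ (p - q) := by
      rw [div_le_iff₀ hδ] at key; linarith [key]
    have hwp : w ^ p = w ^ (p - q) * w ^ q := by
      rw [← Real.rpow_add hw0]; ring_nf
    have hwq : 0 ≤ w ^ q := Real.rpow_nonneg hw _
    have hRq : 0 < R ^ q := Real.rpow_pos_of_pos hR0 _
    nlinarith [mul_le_mul_of_nonneg_right hAδ hwq]

/-- The ball-comparison estimate used at the end of the proof of Theorem 3.1:
for `x, y` in a ball of radius `t^{1/m}` (so `dist x y ≤ 2 t^{1/m}`) and any `ε > 0`,
`V(x,(2s)^{1/m}) ≤ C_ε V(y,s^{1/m}) exp(ε (t/s)^{1/(m-1)} + s^{κ/m})`. -/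
theorem stmt_14
    {X : Type*} [MetricSpace X] [MeasurableSpace X] [BorelSpace X]
    (μ : Measure X)
    (hμ : ∀ (x : X) (r : ℝ), 0 < r → 0 < μ (ball x r) ∧ μ (ball x r) < ⊤)
    (m D κ : ℝ) (hm : 2 ≤ m) (hD : 1 ≤ D) (hκ0 : 0 ≤ κ) (hκ : κ < m / (m - 1))
    (hVD : ∀ (x : X) (τ r : ℝ), 1 ≤ τ → 0 < r →
      μ (ball x (τ * r)) ≤
        ENNReal.ofReal (D * τ ^ D * Real.exp (τ ^ κ + r ^ κ)) * μ (ball x r)) :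
    ∀ ε : ℝ, 0 < ε → ∃ C : ℝ, 0 < C ∧
      ∀ (t s : ℝ) (x y : X), 0 < t → t ≤ 1 → 0 < s → dist x y ≤ 2 * t ^ (1 / m) →
        μ (ball x ((2 * s) ^ (1 / m))) ≤
          ENNReal.ofReal (C * Real.exp (ε * (t / s) ^ (1 / (m - 1)) + s ^ (κ / m))) *
            μ (ball y (s ^ (1 / m))) := by
  intro ε hε
  have hm1 : (0 : ℝ) < m - 1 := by linarith
  have hm0 : (0 : ℝ) < m := by linarith
  set p := m / (m - 1) with hpdef
  have hp1 : 1 < p := (one_lt_div hm1).mpr (by linarith)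
  obtain ⟨C₂, hC₂, H₂⟩ := aux_poly p 1 (2 * D) (ε / 2) zero_le_one hp1 (by linarith)
    (half_pos hε)
  obtain ⟨C₃, hC₃, H₃⟩ := aux_poly p κ ((4 : ℝ) ^ κ) (ε / 2) hκ0 hκ
    (Real.rpow_pos_of_pos (by norm_num) κ) (half_pos hε)
  refine ⟨D * Real.exp (2 * D + 4 ^ κ + C₂ + C₃), by positivity, ?_⟩
  intro t s x y ht ht1 hs hxy
  set w := (t / s) ^ (1 / m : ℝ) with hwdef
  have hts : 0 < t / s := div_pos ht hs
  have hw0 : 0 ≤ w := Real.rpow_nonneg hts.le _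
  set τ := 2 ^ (1 / m : ℝ) + 2 * w with hτdef
  have h1m : (0 : ℝ) < 1 / m := by positivity
  have h21 : (1 : ℝ) ≤ 2 ^ (1 / m : ℝ) := Real.one_le_rpow (by norm_num) h1m.le
  have h22 : (2 : ℝ) ^ (1 / m : ℝ) ≤ 2 := by
    calc (2 : ℝ) ^ (1 / m : ℝ) ≤ 2 ^ (1 : ℝ) :=
          Real.rpow_le_rpow_of_exponent_le (by norm_num)
            (by rw [div_le_one hm0]; linarith)
      _ = 2 := Real.rpow_one 2
  have hτ1 : 1 ≤ τ := by simp only [hτdef]; nlinarith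
  have hτ2 : τ ≤ 2 + 2 * w := by simp only [hτdef]; linarith
  have hsr : 0 < s ^ (1 / m : ℝ) := Real.rpow_pos_of_pos hs _
  -- ball inclusion
  have heq : τ * s ^ (1 / m : ℝ) = (2 * s) ^ (1 / m : ℝ) + 2 * t ^ (1 / m : ℝ) := by
    rw [hτdef, add_mul, Real.mul_rpow (by norm_num) hs.le]
    congr 1
    rw [hwdef, Real.div_rpow ht.le hs.le, mul_assoc, div_mul_cancel₀ _ hsr.ne']
  have hsub : ball x ((2 * s) ^ (1 / m : ℝ)) ⊆ ball y (τ * s ^ (1 / m : ℝ)) := by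
    rw [heq]
    intro z hz
    rw [mem_ball] at hz ⊢
    have h3 := dist_triangle z x y
    linarith
  have step2 := hVD y τ (s ^ (1 / m : ℝ)) hτ1 hsr
  -- real-valued bound
  have hskm : (s ^ (1 / m : ℝ)) ^ κ = s ^ (κ / m) := by
    rw [← Real.rpow_mul hs.le]
    congr 1; field_simp
  have hwp : w ^ p = (t / s) ^ (1 / (m - 1) : ℝ) := by
    rw [hwdef, ← Real.rpow_mul hts.le]
    congr 1
    field_simp [hpdef]
    rw [hpdef, div_mul_cancel₀ _ hm1.ne']
  have hτD : τ ^ D ≤ Real.exp (D * (2 + 2 * w)) := by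
    have h1 : τ ^ D ≤ (2 + 2 * w) ^ D :=
      Real.rpow_le_rpow (by linarith) hτ2 (by linarith)
    have h2 : (2 + 2 * w) ^ D = Real.exp (Real.log (2 + 2 * w) * D) :=
      Real.rpow_def_of_pos (by linarith) D
    have h3 : Real.log (2 + 2 * w) ≤ 2 + 2 * w := by
      have := Real.log_le_sub_one_of_pos (show (0:ℝ) < 2 + 2 * w by linarith)
      linarith
    calc τ ^ D ≤ (2 + 2 * w) ^ D := h1
      _ = Real.exp (Real.log (2 + 2 * w) * D) := h2
      _ ≤ Real.exp (D * (2 + 2 * w)) := by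
          apply Real.exp_le_exp.mpr
          rw [mul_comm]
          apply mul_le_mul_of_nonneg_left h3 (by linarith)
  have hτκ : τ ^ κ ≤ 4 ^ κ + 4 ^ κ * w ^ κ := by
    have hM : τ ≤ 4 * max 1 w := by
      rcases le_total w 1 with h | h
      · rw [max_eq_left h]; linarith
      · rw [max_eq_right h]; linarith
    have hM0 : (0:ℝ) < max 1 w := lt_of_lt_of_le one_pos (le_max_left _ _)
    have h1 : τ ^ κ ≤ (4 * max 1 w) ^ κ :=
      Real.rpow_le_rpow (by linarith) hM hκ0
    have h2 : (4 * max 1 w : ℝ) ^ κ = 4 ^ κ * (max 1 w) ^ κ :=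
      Real.mul_rpow (by norm_num) hM0.le
    have h3 : (max 1 w : ℝ) ^ κ ≤ 1 + w ^ κ := by
      rcases le_total w 1 with h | h
      · rw [max_eq_left h, Real.one_rpow]
        have := Real.rpow_nonneg hw0 κ; linarith
      · rw [max_eq_right h]; linarith
    have h4 : (0:ℝ) < 4 ^ κ := Real.rpow_pos_of_pos (by norm_num) κ
    calc τ ^ κ ≤ 4 ^ κ * (max 1 w) ^ κ := by rw [← h2]; exact h1
      _ ≤ 4 ^ κ * (1 + w ^ κ) := by nlinarith
      _ = 4 ^ κ + 4 ^ κ * w ^ κ := by ring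
  have hsum : 2 * D * w + 4 ^ κ * w ^ κ ≤ ε * w ^ p + C₂ + C₃ := by
    have h2 := H₂ w hw0
    have h3 := H₃ w hw0
    rw [Real.rpow_one] at h2
    linarith
  have hreal : D * τ ^ D * Real.exp (τ ^ κ + (s ^ (1 / m : ℝ)) ^ κ) ≤
      (D * Real.exp (2 * D + 4 ^ κ + C₂ + C₃)) *
        Real.exp (ε * (t / s) ^ (1 / (m - 1) : ℝ) + s ^ (κ / m)) := by
    have hτD0 : 0 ≤ τ ^ D := Real.rpow_nonneg (by linarith) _
    calc D * τ ^ D * Real.exp (τ ^ κ + (s ^ (1 / m : ℝ)) ^ κ)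
        ≤ D * Real.exp (D * (2 + 2 * w)) *
            Real.exp (4 ^ κ + 4 ^ κ * w ^ κ + s ^ (κ / m)) := by
          rw [hskm]
          apply mul_le_mul
          · exact mul_le_mul_of_nonneg_left hτD (by linarith)
          · exact Real.exp_le_exp.mpr (by linarith)
          · positivity
          · positivity
      _ = D * Real.exp (2 * D + 4 ^ κ + (2 * D * w + 4 ^ κ * w ^ κ) + s ^ (κ / m)) := by
          rw [mul_assoc, ← Real.exp_add]
          congr 2; ring
      _ ≤ D * Real.exp (2 * D + 4 ^ κ + (ε * w ^ p + C₂ + C₃) + s ^ (κ / m)) := by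
          apply mul_le_mul_of_nonneg_left (Real.exp_le_exp.mpr (by linarith)) (by linarith)
      _ = (D * Real.exp (2 * D + 4 ^ κ + C₂ + C₃)) *
            Real.exp (ε * (t / s) ^ (1 / (m - 1) : ℝ) + s ^ (κ / m)) := by
          rw [← hwp, mul_assoc, ← Real.exp_add]
          congr 2; ring
  calc μ (ball x ((2 * s) ^ (1 / m : ℝ)))
      ≤ μ (ball y (τ * s ^ (1 / m : ℝ))) := measure_mono hsub
    _ ≤ ENNReal.ofReal (D * τ ^ D * Real.exp (τ ^ κ + (s ^ (1 / m : ℝ)) ^ κ)) *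
          μ (ball y (s ^ (1 / m : ℝ))) := step2
    _ ≤ ENNReal.ofReal ((D * Real.exp (2 * D + 4 ^ κ + C₂ + C₃)) *
          Real.exp (ε * (t / s) ^ (1 / (m - 1) : ℝ) + s ^ (κ / m))) *
          μ (ball y (s ^ (1 / m : ℝ))) :=
        by gcongr ?_ * _; exact ENNReal.ofReal_le_ofReal hreal
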